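/- There exists a four-player partnership domino game that ends with one player playing the last tile of their hand, in which the winning team (the team of that player) scores 111 points; in particular, it is possible to win a whole game (reach at least 100 points) in a single round. -/

import Mathlib

/-- A domino tile is an unordered pair of values in `{0,…,6}`. -/
abbrev Tile := Sym2 (Fin 7)

/-- The pip sum of the tile `[a,b]` is `a + b`. -/
def pips (t : Tile) : ℕ :=
  Sym2.lift ⟨fun (a b : Fin 7) => (a : ℕ) + (b : ℕ), fun a b => Nat.add_comm a b⟩ t

/-- The board: the chain of already played tiles, as a list of oriented tiles
concatenated left to right (consecutive tiles match end to end). -/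
abbrev Board := List (Fin 7 × Fin 7)

/-- The total pip sum of the tiles on a board. -/
def boardPips (b : Board) : ℕ := (b.map fun p => (p.1 : ℕ) + (p.2 : ℕ)).sum

/-- A tile `t` can extend a (nonempty) board `b` when `t` contains one of the two
open ends of `b`. -/
def canExtend (b : Board) (t : Tile) : Prop :=
  b ≠ [] ∧ (b.head!.1 ∈ t ∨ b.getLast!.2 ∈ t)

/-- The total pip sum of a hand of tiles. -/
def handPips (h : Finset Tile) : ℕ := ∑ t ∈ h, pips t

/-- A game state: the board of already played tiles, the four remaining hands, and
whose turn it is. -/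
structure GState where
  board : Board
  hands : Fin 4 → Finset Tile
  turn : Fin 4

/-- Players `0` and `2` form team `false`; players `1` and `3` form team `true`. -/
def playerTeam (i : Fin 4) : Bool := decide ((i : ℕ) % 2 = 1)

/-- The total pip sum remaining in the hands of the two players of a team. -/
def GState.teamPips (s : GState) (tm : Bool) : ℕ :=
  if tm then handPips (s.hands 1) + handPips (s.hands 3)
  else handPips (s.hands 0) + handPips (s.hands 2)

/-- A single legal move of the game (the game is still running, i.e. all hands are
nonempty).  The player to move either plays a tile from their hand — the first tile
played starts the chain, and every later tile is appended, suitably oriented, to one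
of the two open ends of the chain — or passes, which is permitted only if no tile
remaining in their hand contains either open end of the chain. -/
inductive Step : GState → GState → Prop
  | playFirst (s : GState) (p : Fin 7 × Fin 7)
      (hrun : ∀ i, s.hands i ≠ ∅)
      (hb : s.board = [])
      (ht : Sym2.mk p.1 p.2 ∈ s.hands s.turn) :
      Step s ⟨[p],
        Function.update s.hands s.turn ((s.hands s.turn).erase (Sym2.mk p.1 p.2)),
        s.turn + 1⟩
  | playLeft (s : GState) (p : Fin 7 × Fin 7)
      (hrun : ∀ i, s.hands i ≠ ∅)
      (hb : s.board ≠ [])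
      (ht : Sym2.mk p.1 p.2 ∈ s.hands s.turn)
      (hfit : p.2 = s.board.head!.1) :
      Step s ⟨p :: s.board,
        Function.update s.hands s.turn ((s.hands s.turn).erase (Sym2.mk p.1 p.2)),
        s.turn + 1⟩
  | playRight (s : GState) (p : Fin 7 × Fin 7)
      (hrun : ∀ i, s.hands i ≠ ∅)
      (hb : s.board ≠ [])
      (ht : Sym2.mk p.1 p.2 ∈ s.hands s.turn)
      (hfit : p.1 = s.board.getLast!.2) :
      Step s ⟨s.board ++ [p],
        Function.update s.hands s.turn ((s.hands s.turn).erase (Sym2.mk p.1 p.2)),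
        s.turn + 1⟩
  | pass (s : GState)
      (hrun : ∀ i, s.hands i ≠ ∅)
      (hb : s.board ≠ [])
      (hcant : ∀ t ∈ s.hands s.turn, ¬ canExtend s.board t) :
      Step s ⟨s.board, s.hands, s.turn + 1⟩

/-- A four-player partnership domino game: a partition of the 28 domino tiles into
four initial hands of 7 tiles each, together with a legal play sequence of states;
player 1 (index `0`) moves first, and players move cyclically. -/
structure Game where
  initHands : Fin 4 → Finset Tile
  card_initHands : ∀ i, (initHands i).card = 7
  disj_initHands : ∀ i j, i ≠ j → Disjoint (initHands i) (initHands j)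
  cover_initHands : ∀ t : Tile, ∃ i, t ∈ initHands i
  states : List GState
  states_ne : states ≠ []
  head_states : states.head states_ne = ⟨[], initHands, 0⟩
  chain_states : states.Chain' Step

/-- The final position of a game. -/
def Game.finalState (g : Game) : GState := g.states.getLast g.states_ne

/-- A position is blocked if at least one tile has been played and no player's
remaining hand contains a tile containing either open end of the chain. -/
def IsBlocked (s : GState) : Prop :=
  s.board ≠ [] ∧ ∀ i : Fin 4, ∀ t ∈ s.hands i, ¬ canExtend s.board t

/-- A game ends blocked if its final position is blocked. -/
def Game.EndsBlocked (g : Game) : Prop := IsBlocked g.finalState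

/-- Team `tm` plays at least one tile during the game: at some turn the player to move
belongs to team `tm` and the board changes (a tile is placed). -/
def Game.teamPlays (g : Game) (tm : Bool) : Prop :=
  ∃ (i : ℕ) (h : i + 1 < g.states.length),
    playerTeam ((g.states.get ⟨i, by omega⟩).turn) = tm ∧
    (g.states.get ⟨i + 1, h⟩).board ≠ (g.states.get ⟨i, by omega⟩).board


namespace DominoOut111

/-- Shorthand for a tile. -/
def T (a b : Fin 7) : Tile := Sym2.mk a b

/-- A concrete move. -/
inductive Mv where
  | first (p : Fin 7 × Fin 7)
  | left (p : Fin 7 × Fin 7)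
  | right (p : Fin 7 × Fin 7)
  | pass
deriving DecidableEq

/-- Apply a move to a state (mirrors the targets of the `Step` constructors). -/
def applyMv (s : GState) : Mv → GState
  | .first p => ⟨[p], Function.update s.hands s.turn ((s.hands s.turn).erase (Sym2.mk p.1 p.2)), s.turn + 1⟩
  | .left p => ⟨p :: s.board, Function.update s.hands s.turn ((s.hands s.turn).erase (Sym2.mk p.1 p.2)), s.turn + 1⟩
  | .right p => ⟨s.board ++ [p], Function.update s.hands s.turn ((s.hands s.turn).erase (Sym2.mk p.1 p.2)), s.turn + 1⟩
  | .pass => ⟨s.board, s.hands, s.turn + 1⟩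

/-- Legality of a move (mirrors the hypotheses of the `Step` constructors). -/
def legalMv (s : GState) : Mv → Prop
  | .first p => (∀ i, s.hands i ≠ ∅) ∧ s.board = [] ∧ Sym2.mk p.1 p.2 ∈ s.hands s.turn
  | .left p => (∀ i, s.hands i ≠ ∅) ∧ s.board ≠ [] ∧ Sym2.mk p.1 p.2 ∈ s.hands s.turn ∧
      p.2 = s.board.head!.1
  | .right p => (∀ i, s.hands i ≠ ∅) ∧ s.board ≠ [] ∧ Sym2.mk p.1 p.2 ∈ s.hands s.turn ∧
      p.1 = s.board.getLast!.2
  | .pass => (∀ i, s.hands i ≠ ∅) ∧ s.board ≠ [] ∧ ∀ t ∈ s.hands s.turn, ¬ canExtend s.board t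

instance (b : Board) (t : Tile) : Decidable (canExtend b t) := by
  unfold canExtend; infer_instance

instance (s : GState) (m : Mv) : Decidable (legalMv s m) := by
  cases m <;> (unfold legalMv; infer_instance)

theorem step_of_legal (s : GState) (m : Mv) (h : legalMv s m) : Step s (applyMv s m) := by
  cases m with
  | first p => exact Step.playFirst s p h.1 h.2.1 h.2.2
  | left p => exact Step.playLeft s p h.1 h.2.1 h.2.2.1 h.2.2.2
  | right p => exact Step.playRight s p h.1 h.2.1 h.2.2.1 h.2.2.2
  | pass => exact Step.pass s h.1 h.2.1 h.2.2

/-- The list of states visited while playing a list of moves. -/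
def run (s : GState) : List Mv → List GState
  | [] => [s]
  | m :: ms => s :: run (applyMv s m) ms

/-- A list of moves is legal from a state. -/
def legalSeq (s : GState) : List Mv → Prop
  | [] => True
  | m :: ms => legalMv s m ∧ legalSeq (applyMv s m) ms

instance (s : GState) (ms : List Mv) : Decidable (legalSeq s ms) := by
  induction ms generalizing s with
  | nil => exact inferInstanceAs (Decidable True)
  | cons m ms ih => exact @instDecidableAnd _ _ _ (ih _)

theorem run_ne_nil (s : GState) (ms : List Mv) : run s ms ≠ [] := by
  cases ms <;> simp [run]

theorem run_head (s : GState) (ms : List Mv) (h : run s ms ≠ []) :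
    (run s ms).head h = s := by
  cases ms <;> rfl

theorem run_chain' (s : GState) (ms : List Mv) (h : legalSeq s ms) :
    (run s ms).Chain' Step := by
  induction ms generalizing s with
  | nil => simp [run]; exact List.isChain_singleton s
  | cons m ms ih =>
    show List.Chain' Step (s :: run (applyMv s m) ms)
    refine List.isChain_cons.2 ⟨?_, ih _ h.2⟩
    intro y hy
    have : (run (applyMv s m) ms).head? = some (applyMv s m) := by
      rw [← List.head_eq_iff_head?_eq_some (run_ne_nil _ _), run_head]
    rw [this] at hy
    cases hy
    exact step_of_legal s m h.1

theorem run_getLast (s : GState) (ms : List Mv) (h : run s ms ≠ []) :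
    (run s ms).getLast h = ms.foldl applyMv s := by
  induction ms generalizing s with
  | nil => rfl
  | cons m ms ih =>
    show (s :: run (applyMv s m) ms).getLast _ = _
    rw [List.getLast_cons (run_ne_nil _ _), ih]
    rfl

/-- The deal. -/
def H : Fin 4 → Finset Tile
  | 0 => {T 0 0, T 0 2, T 0 3, T 0 5, T 0 6, T 1 2, T 1 4}
  | 1 => {T 3 3, T 3 4, T 3 5, T 3 6, T 4 4, T 4 5, T 4 6}
  | 2 => {T 0 1, T 0 4, T 1 1, T 1 3, T 2 2, T 2 3, T 2 4}
  | 3 => {T 1 5, T 1 6, T 2 5, T 2 6, T 5 5, T 5 6, T 6 6}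

def s0 : GState := ⟨[], H, 0⟩

def moves : List Mv :=
  [.first (1,2), .pass, .left (1,1), .right (2,5), .right (5,0), .pass, .left (0,1), .pass,
   .right (0,0), .pass, .right (0,4), .pass, .right (4,1), .pass, .right (1,3), .pass,
   .right (3,0), .pass, .pass, .pass, .left (2,0), .pass, .left (3,2), .pass, .right (0,6)]

theorem legal_moves : legalSeq s0 moves := by decide

/-- The concrete game. -/
def game : Game where
  initHands := H
  card_initHands := by decide
  disj_initHands := by decide
  cover_initHands := by decide
  states := run s0 moves
  states_ne := run_ne_nil _ _
  head_states := run_head _ _ _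
  chain_states := run_chain' _ _ legal_moves

theorem final_eq : game.finalState = moves.foldl applyMv s0 :=
  run_getLast _ _ _

end DominoOut111

/-- There exists a four-player partnership domino game that ends with one player
playing the last tile of their hand, in which the winning team (the team of that
player) scores 111 points — the score being the total pip sum of the tiles remaining
in the two hands of the opposing team.  In particular, since 100 ≤ 111, it is
possible to win a whole game (reach at least 100 points) in a single round. -/


theorem exists_game_domino_out_score_111 :
    ∃ (g : Game) (i : Fin 4),
      g.finalState.hands i = ∅ ∧
      g.finalState.teamPips (!(playerTeam i)) = 111 ∧
      100 ≤ g.finalState.teamPips (!(playerTeam i)) := by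
  refine ⟨DominoOut111.game, 0, ?_, ?_, ?_⟩ <;>
    rw [DominoOut111.final_eq] <;> decide
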